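/- arXiv:2507.18141 — 3 statements merged into one kernel-verified Lean document; each statement's English description precedes it below -/
import Mathlib

section
/- Small-gain compositional condition: Let M ∈ ℕ⁺, and for i = 1,…,M let S_i : ℝ^{n_i} × ℝ^{n_i} → ℝ≥0, constants α̲_i > 0, γ_i ∈ (0,1), ρ_i ≥ 0 satisfy: (a) α̲_i‖x_i − x_i'‖² ≤ S_i(x_i, x_i'), and (b) S_i(f_i(x_i, w_i), f_i(x_i', w_i')) ≤ γ_i S_i(x_i, x_i') + ρ_i ‖w_i − w_i'‖² for all states and internal inputs. Consider the interconnection w_{ij} = x_j (j ≠ i). Define Γ = diag(1 − γ_1, …, 1 − γ_M) and Δ = {δ̂_{ij}} with δ̂_{ij} = ρ_i / α̲_j for i ≠ j, δ̂_{ii} = 0. If every entry ζ_i of the row vector 𝟙_M^⊤(−Γ + Δ) is negative, then for V(x, x') := Σ_i S_i(x_i, x_i') and any ζ with max_i ζ_i < ζ < 0 and ζ ∈ (−1, 0), the interconnected map f(x) = [f_1(x_1, w_1); …; f_M(x_M, w_M)] satisfies V(f(x), f(x')) ≤ (1 + ζ) V(x, x') for all x, x' ∈ ℝ^n, with 0 <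 1 + ζ < 1. -/
/-- Small-gain compositional condition: if every entry of 𝟙ᵀ(−Γ+Δ) is negative, then
V = Σ S_i decreases by factor 1+ζ along the interconnected dynamics, for any ζ with
max_i ζ_i < ζ < 0, ζ ∈ (−1,0). -/
theorem small_gain_composition {M : ℕ} [NeZero M] (E : Fin M → Type*)
    [∀ i, NormedAddCommGroup (E i)]
    (f : ∀ i, E i → PiLp 2 (fun j : {j : Fin M // j ≠ i} => E j.1) → E i)
    (S : ∀ i, E i → E i → ℝ) (a γ ρ : Fin M → ℝ)
    (ha : ∀ i, 0 < a i) (hγ : ∀ i, γ i ∈ Set.Ioo (0:ℝ) 1) (hρ : ∀ i, 0 ≤ ρ i)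
    (hlow : ∀ i (x x' : E i), a i * ‖x - x'‖^2 ≤ S i x x')
    (hdiss : ∀ i (x x' : E i) (w w' : PiLp 2 (fun j : {j : Fin M // j ≠ i} => E j.1)),
      S i (f i x w) (f i x' w') ≤ γ i * S i x x' + ρ i * ‖w - w'‖^2)
    (hneg : ∀ j, γ j - 1 + (∑ i ∈ Finset.univ.erase j, ρ i) / a j < 0)
    (ζ : ℝ) (hζmax : ∀ j, γ j - 1 + (∑ i ∈ Finset.univ.erase j, ρ i) / a j < ζ)
    (hζ0 : ζ < 0) (hζ1 : -1 < ζ) :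
    (∀ x x' : ∀ i, E i,
      (∑ i, S i (f i (x i) (WithLp.toLp 2 (fun j : {j : Fin M // j ≠ i} => x j.1))) (f i (x' i) (WithLp.toLp 2 (fun j : {j : Fin M // j ≠ i} => x' j.1))))
        ≤ (1 + ζ) * ∑ i, S i (x i) (x' i)) ∧ 0 < 1 + ζ ∧ 1 + ζ < 1 := by
  refine ⟨?_, by linarith, by linarith⟩
  intro x x'
  set n : Fin M → ℝ := fun j => ‖x j - x' j‖^2 with hn
  have hn0 : ∀ j, 0 ≤ n j := fun j => pow_nonneg (norm_nonneg _) 2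
  have hS0 : ∀ j, 0 ≤ S j (x j) (x' j) := fun j =>
    le_trans (mul_nonneg (ha j).le (pow_nonneg (norm_nonneg _) 2)) (hlow j (x j) (x' j))
  have hw : ∀ (i : Fin M) (w w' : PiLp 2 (fun j : {j : Fin M // j ≠ i} => E j.1)),
      (w = WithLp.toLp 2 (fun j : {j : Fin M // j ≠ i} => x j.1)) →
      (w' = WithLp.toLp 2 (fun j : {j : Fin M // j ≠ i} => x' j.1)) →
      ‖w - w'‖^2 = ∑ j ∈ Finset.univ.erase i, n j := by
    rintro i w w' rfl rfl
    rw [PiLp.norm_sq_eq_of_L2,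
      Finset.sum_subtype (p := fun j => j ≠ i) (Finset.univ.erase i)
        (fun j => by simp [Finset.mem_erase]) (fun j => n j)]
    rfl
  calc ∑ i, S i (f i (x i) (WithLp.toLp 2 (fun j => x j.1))) (f i (x' i) (WithLp.toLp 2 (fun j => x' j.1)))
      ≤ ∑ i, (γ i * S i (x i) (x' i) + ρ i * ∑ j ∈ Finset.univ.erase i, n j) := by
        refine Finset.sum_le_sum fun i _ => ?_
        have h := hdiss i (x i) (x' i) (WithLp.toLp 2 (fun j => x j.1)) (WithLp.toLp 2 (fun j => x' j.1))
        rw [hw i _ _ rfl rfl] at h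
        exact h
    _ = ∑ i, γ i * S i (x i) (x' i)
          + ∑ j, (∑ i ∈ Finset.univ.erase j, ρ i) * n j := by
        rw [Finset.sum_add_distrib]
        congr 1
        simp only [Finset.mul_sum, Finset.sum_mul]
        rw [Finset.sum_sigma', Finset.sum_sigma']
        refine Finset.sum_nbij' (fun p => ⟨p.2, p.1⟩) (fun p => ⟨p.2, p.1⟩) ?_ ?_ ?_ ?_ ?_ <;>
          simp +contextual [Finset.mem_erase, eq_comm, ne_comm]
    _ ≤ ∑ i, γ i * S i (x i) (x' i)
          + ∑ j, (∑ i ∈ Finset.univ.erase j, ρ i) / a j * S j (x j) (x' j) := by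
        refine add_le_add (le_refl _) (Finset.sum_le_sum fun j _ => ?_)
        have hr : 0 ≤ (∑ i ∈ Finset.univ.erase j, ρ i) / a j :=
          div_nonneg (Finset.sum_nonneg fun i _ => hρ i) (ha j).le
        have h1 : a j * n j ≤ S j (x j) (x' j) := hlow j (x j) (x' j)
        have hane : a j ≠ 0 := (ha j).ne'
        calc (∑ i ∈ Finset.univ.erase j, ρ i) * n j
            = (∑ i ∈ Finset.univ.erase j, ρ i) / a j * (a j * n j) := by
              field_simp
          _ ≤ _ := mul_le_mul_of_nonneg_left h1 hr
    _ = ∑ j, (γ j + (∑ i ∈ Finset.univ.erase j, ρ i) / a j) * S j (x j) (x' j) := by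
        rw [← Finset.sum_add_distrib]; congr 1; ext j; ring
    _ ≤ ∑ j, (1 + ζ) * S j (x j) (x' j) := by
        refine Finset.sum_le_sum fun j _ => ?_
        have := hζmax j
        nlinarith [hS0 j]
    _ = (1 + ζ) * ∑ i, S i (x i) (x' i) := by rw [Finset.mul_sum]
end

section
/- Suppose each subsystem i ∈ {1,…,M} satisfies, for all states x_i, x_i' and internal inputs w_i, w_i': S_i(f_i(x_i, w_i), f_i(x_i', w_i')) ≤ γ_i S_i(x_i, x_i') + ρ_i ‖w_i − w_i'‖², with α̲_j‖x_j − x_j'‖² ≤ S_j(x_j, x_j') for all j. Under the ring interconnection w_i = x_{i−1} (indices mod M, i.e., w_1 = x_M), the composite function V(x, x') = Σ_i S_i(x_i, x_i') satisfies V(f(x), f(x')) ≤ Σ_i (γ_i S_i(x_i, x_i') + (ρ_{σ(i)}/α̲_i) S_i(x_i, x_i')), where σ(i) = i+1 mod M; in particular if γ_i + ρ_{σ(i)}/α̲_i ≤ 1 + ζ for all i with −1 < ζ < 0, then V(f(x), f(x')) ≤ (1 + ζ) V(x, x'). -/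
/-- Ring interconnection: the composite V = Σ S_i satisfies the small-gain decrease
estimate under the ring topology w_i = x_{i−1}. -/
theorem ring_interconnection_decrease {M : ℕ} [NeZero M] (E : Fin M → Type*)
    [∀ i, NormedAddCommGroup (E i)]
    (f : ∀ i : Fin M, E i → E (i - 1) → E i)
    (S : ∀ i, E i → E i → ℝ) (a γ ρ : Fin M → ℝ)
    (ha : ∀ i, 0 < a i) (hγ : ∀ i, γ i ∈ Set.Ioo (0:ℝ) 1) (hρ : ∀ i, 0 ≤ ρ i)
    (hSnn : ∀ i x x', 0 ≤ S i x x')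
    (hdiss : ∀ i (x x' : E i) (w w' : E (i - 1)),
      S i (f i x w) (f i x' w') ≤ γ i * S i x x' + ρ i * ‖w - w'‖^2)
    (hlow : ∀ j (x x' : E j), a j * ‖x - x'‖^2 ≤ S j x x')
    (x x' : ∀ i, E i) :
    ((∑ i, S i (f i (x i) (x (i - 1))) (f i (x' i) (x' (i - 1))))
        ≤ ∑ i, (γ i * S i (x i) (x' i) + (ρ (i + 1) / a i) * S i (x i) (x' i))) ∧
    (∀ ζ : ℝ, -1 < ζ → ζ < 0 → (∀ i, γ i + ρ (i + 1) / a i ≤ 1 + ζ) →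
      (∑ i, S i (f i (x i) (x (i - 1))) (f i (x' i) (x' (i - 1))))
        ≤ (1 + ζ) * ∑ i, S i (x i) (x' i)) := by
  have key : (∑ i, S i (f i (x i) (x (i - 1))) (f i (x' i) (x' (i - 1))))
      ≤ ∑ i, (γ i * S i (x i) (x' i) + (ρ (i + 1) / a i) * S i (x i) (x' i)) := by
    have step1 : (∑ i, S i (f i (x i) (x (i - 1))) (f i (x' i) (x' (i - 1))))
        ≤ ∑ i, (γ i * S i (x i) (x' i) + ρ i * ‖x (i - 1) - x' (i - 1)‖^2) :=
      Finset.sum_le_sum fun i _ => hdiss i _ _ _ _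
    have reindex : (∑ i, ρ i * ‖x (i - 1) - x' (i - 1)‖^2)
        = ∑ i, ρ (i + 1) * ‖x i - x' i‖^2 := by
      apply Fintype.sum_equiv (Equiv.subRight (1 : Fin M))
      intro i
      simp [Equiv.subRight]
      exact Or.inl rfl
    have step2 : (∑ i, ρ (i + 1) * ‖x i - x' i‖^2)
        ≤ ∑ i, (ρ (i + 1) / a i) * S i (x i) (x' i) := by
      apply Finset.sum_le_sum
      intro i _
      have h1 : ‖x i - x' i‖^2 ≤ S i (x i) (x' i) / a i := by
        rw [le_div_iff₀ (ha i)]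
        linarith [hlow i (x i) (x' i)]
      calc ρ (i + 1) * ‖x i - x' i‖^2 ≤ ρ (i + 1) * (S i (x i) (x' i) / a i) :=
            mul_le_mul_of_nonneg_left h1 (hρ _)
        _ = (ρ (i + 1) / a i) * S i (x i) (x' i) := by ring
    calc (∑ i, S i (f i (x i) (x (i - 1))) (f i (x' i) (x' (i - 1))))
        ≤ ∑ i, (γ i * S i (x i) (x' i) + ρ i * ‖x (i - 1) - x' (i - 1)‖^2) := step1
      _ = (∑ i, γ i * S i (x i) (x' i)) + ∑ i, ρ i * ‖x (i - 1) - x' (i - 1)‖^2 :=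
          Finset.sum_add_distrib
      _ = (∑ i, γ i * S i (x i) (x' i)) + ∑ i, ρ (i + 1) * ‖x i - x' i‖^2 := by
          rw [reindex]
      _ ≤ (∑ i, γ i * S i (x i) (x' i)) + ∑ i, (ρ (i + 1) / a i) * S i (x i) (x' i) := by
          linarith
      _ = ∑ i, (γ i * S i (x i) (x' i) + (ρ (i + 1) / a i) * S i (x i) (x' i)) :=
          Finset.sum_add_distrib.symm
  refine ⟨key, fun ζ _ _ hζ => key.trans ?_⟩
  rw [Finset.mul_sum]
  apply Finset.sum_le_sum
  intro i _
  have := hζ i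
  nlinarith [hSnn i (x i) (x' i)]
end

section
/- Consider the two-subsystem negative-feedback interconnection x(k+1) = A x(k) with block matrix A = [[A₁, −B₁], [B₂, A₂]]. Suppose there exist symmetric positive definite P₁, P₂, constants ϑ₁, ϑ₂ > 0 and γ̄₁, γ̄₂ ∈ (0,1) with (1+ϑ_i) A_iᵀ P_i A_i ⪯ γ̄_i P_i for i = 1, 2, and set ρ_i = (1 + 1/ϑ_i)‖√P_i B_i‖², α̲_i = λ_min(P_i). If (1 − γ̄₁) > ρ₂/α̲₁ and (1 − γ̄₂) > ρ₁/α̲₂, then V(x, x') = (x₁−x₁')ᵀP₁(x₁−x₁') + (x₂−x₂')ᵀP₂(x₂−x₂') satisfies V(Ax, Ax') ≤ (1+ζ)V(x, x') for some ζ ∈ (−1, 0) and the interconnected linear system is δ-GAS. -/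
open Matrix

namespace TwoSubAux

variable {m n : ℕ}

lemma dot_sym (P : Matrix (Fin n) (Fin n) ℝ) (hP : P.IsHermitian) (u v : Fin n → ℝ) :
    u ⬝ᵥ P *ᵥ v = v ⬝ᵥ P *ᵥ u := by
  have hPt : Pᵀ = P := by
    rw [← Matrix.conjTranspose_eq_transpose_of_trivial]; exact hP
  rw [Matrix.dotProduct_mulVec, ← Matrix.vecMul_transpose, hPt, dotProduct_comm]

lemma psd_nonneg {P : Matrix (Fin n) (Fin n) ℝ} (hP : P.PosSemidef) (x : Fin n → ℝ) :
    0 ≤ x ⬝ᵥ P *ᵥ x := by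
  have := hP.dotProduct_mulVec_nonneg x
  simpa using this

lemma dot_transform (M : Matrix (Fin m) (Fin n) ℝ) (P : Matrix (Fin m) (Fin m) ℝ)
    (v : Fin n → ℝ) : v ⬝ᵥ (Mᵀ * P * M) *ᵥ v = (M *ᵥ v) ⬝ᵥ P *ᵥ (M *ᵥ v) := by
  rw [← Matrix.mulVec_mulVec, ← Matrix.mulVec_mulVec, Matrix.dotProduct_mulVec v,
    Matrix.vecMul_transpose]

lemma young (P : Matrix (Fin n) (Fin n) ℝ) (hP : P.PosSemidef) {ϑ : ℝ} (hϑ : 0 < ϑ)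
    (u v : Fin n → ℝ) :
    (u + v) ⬝ᵥ P *ᵥ (u + v) ≤ (1+ϑ) * (u ⬝ᵥ P *ᵥ u) + (1+1/ϑ) * (v ⬝ᵥ P *ᵥ v) := by
  have h0 : 0 ≤ (ϑ • u - v) ⬝ᵥ P *ᵥ (ϑ • u - v) := psd_nonneg hP _
  have hsym : u ⬝ᵥ P *ᵥ v = v ⬝ᵥ P *ᵥ u := dot_sym P hP.1 u v
  have hexp : (ϑ • u - v) ⬝ᵥ P *ᵥ (ϑ • u - v) =
      ϑ^2 * (u ⬝ᵥ P *ᵥ u) - ϑ * (u ⬝ᵥ P *ᵥ v) - ϑ * (v ⬝ᵥ P *ᵥ u) + v ⬝ᵥ P *ᵥ v := by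
    simp [Matrix.mulVec_smul, sub_dotProduct, dotProduct_sub,
      smul_dotProduct, dotProduct_smul, Matrix.mulVec_sub, smul_eq_mul]
    ring
  have hexp2 : (u + v) ⬝ᵥ P *ᵥ (u + v) =
      u ⬝ᵥ P *ᵥ u + u ⬝ᵥ P *ᵥ v + v ⬝ᵥ P *ᵥ u + v ⬝ᵥ P *ᵥ v := by
    simp [Matrix.mulVec_add, add_dotProduct, dotProduct_add]
    ring
  rw [hexp] at h0
  rw [hexp2]
  have hϑ' : ϑ ≠ 0 := ne_of_gt hϑ
  rw [hsym] at h0 ⊢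
  have h2 : 2 * (v ⬝ᵥ P *ᵥ u) ≤ ϑ * (u ⬝ᵥ P *ᵥ u) + (v ⬝ᵥ P *ᵥ v) / ϑ := by
    rw [← sub_nonneg]
    have heq : ϑ * (u ⬝ᵥ P *ᵥ u) + (v ⬝ᵥ P *ᵥ v) / ϑ - 2 * (v ⬝ᵥ P *ᵥ u)
        = (ϑ ^ 2 * (u ⬝ᵥ P *ᵥ u) - ϑ * (v ⬝ᵥ P *ᵥ u) - ϑ * (v ⬝ᵥ P *ᵥ u) + v ⬝ᵥ P *ᵥ v) / ϑ := by
      field_simp; ring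
    rw [heq]
    exact div_nonneg h0 hϑ.le
  have h3 : (1/ϑ) * (v ⬝ᵥ P *ᵥ v) = (v ⬝ᵥ P *ᵥ v) / ϑ := by ring
  linarith [h2]

lemma spectral_decomp (P : Matrix (Fin n) (Fin n) ℝ) (hP : P.IsHermitian) (x : Fin n → ℝ) :
    ∃ y : Fin n → ℝ, (x ⬝ᵥ P *ᵥ x = ∑ i, hP.eigenvalues i * (y i * y i)) ∧
      (x ⬝ᵥ x = ∑ i, y i * y i) := by
  classical
  set U : Matrix (Fin n) (Fin n) ℝ := (hP.eigenvectorUnitary : Matrix (Fin n) (Fin n) ℝ)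
  have hU : U * star U = 1 := (Matrix.mem_unitaryGroup_iff).mp hP.eigenvectorUnitary.2
  set y : Fin n → ℝ := (star U) *ᵥ x with hy
  refine ⟨y, ?_, ?_⟩
  · conv_lhs => rw [hP.spectral_theorem]
    have hdiag : diagonal (RCLike.ofReal ∘ hP.eigenvalues) = diagonal hP.eigenvalues := by
      ext i j; simp [Matrix.diagonal]
    rw [hdiag, Unitary.conjStarAlgAut_apply]
    rw [← Matrix.mulVec_mulVec, ← Matrix.mulVec_mulVec, Matrix.dotProduct_mulVec x U]
    have hvm : x ᵥ* U = (star U) *ᵥ x := by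
      rw [← Matrix.vecMul_transpose]
      congr 1
    rw [hvm]
    show y ⬝ᵥ (diagonal hP.eigenvalues) *ᵥ y = _
    simp [dotProduct, Matrix.mulVec_diagonal, mul_comm, mul_left_comm]
  · have : y ⬝ᵥ y = x ⬝ᵥ (U *ᵥ ((star U) *ᵥ x)) := by
      rw [hy, Matrix.dotProduct_mulVec x U]
      congr 1
      rw [← Matrix.vecMul_transpose]
      congr 1
    rw [Matrix.mulVec_mulVec, hU, Matrix.one_mulVec] at this
    rw [← this]
    simp [dotProduct]

lemma eig_lower [NeZero n] (P : Matrix (Fin n) (Fin n) ℝ) (hP : P.IsHermitian) (x : Fin n → ℝ) :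
    (Finset.univ.inf' Finset.univ_nonempty hP.eigenvalues) * (x ⬝ᵥ x) ≤ x ⬝ᵥ P *ᵥ x := by
  obtain ⟨y, h1, h2⟩ := spectral_decomp P hP x
  rw [h1, h2, Finset.mul_sum]
  refine Finset.sum_le_sum fun i _ => ?_
  exact mul_le_mul_of_nonneg_right (Finset.inf'_le _ (Finset.mem_univ i)) (mul_self_nonneg _)

lemma eig_upper [NeZero n] (P : Matrix (Fin n) (Fin n) ℝ) (hP : P.IsHermitian) (x : Fin n → ℝ) :
    x ⬝ᵥ P *ᵥ x ≤ (Finset.univ.sup' Finset.univ_nonempty hP.eigenvalues) * (x ⬝ᵥ x) := by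
  obtain ⟨y, h1, h2⟩ := spectral_decomp P hP x
  rw [h1, h2, Finset.mul_sum]
  refine Finset.sum_le_sum fun i _ => ?_
  exact mul_le_mul_of_nonneg_right (Finset.le_sup' _ (Finset.mem_univ i)) (mul_self_nonneg _)

lemma opnorm_bound (M : Matrix (Fin m) (Fin n) ℝ) (v : Fin n → ℝ) :
    (M *ᵥ v) ⬝ᵥ (M *ᵥ v) ≤
      ‖LinearMap.toContinuousLinearMap (Matrix.toEuclideanLin M)‖^2 * (v ⬝ᵥ v) := by
  set f := LinearMap.toContinuousLinearMap (Matrix.toEuclideanLin M)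
  set w : EuclideanSpace ℝ (Fin n) := (WithLp.equiv 2 (Fin n → ℝ)).symm v
  have hfw : f w = (WithLp.equiv 2 (Fin m → ℝ)).symm (M *ᵥ v) := by
    simp [f, w, Matrix.toEuclideanLin_apply_piLp_toLp]
  have hnorm : ‖f w‖ ≤ ‖f‖ * ‖w‖ := f.le_opNorm w
  have h1 : ‖f w‖^2 = (M *ᵥ v) ⬝ᵥ (M *ᵥ v) := by
    rw [hfw, EuclideanSpace.norm_eq]
    rw [Real.sq_sqrt (by positivity)]
    simp [dotProduct, sq]
  have h2 : ‖w‖^2 = v ⬝ᵥ v := by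
    rw [EuclideanSpace.norm_eq, Real.sq_sqrt (by positivity)]
    simp [dotProduct, sq, w]
  calc (M *ᵥ v) ⬝ᵥ (M *ᵥ v) = ‖f w‖^2 := h1.symm
    _ ≤ (‖f‖ * ‖w‖)^2 := by
        have := norm_nonneg (f w)
        nlinarith [norm_nonneg w, norm_nonneg f, hnorm]
    _ = ‖f‖^2 * (v ⬝ᵥ v) := by rw [mul_pow, h2]

noncomputable abbrev psq {P : Matrix (Fin n) (Fin n) ℝ} (hP : P.PosSemidef) : Matrix (Fin n) (Fin n) ℝ :=
  (hP.1.eigenvectorUnitary : Matrix (Fin n) (Fin n) ℝ) *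
    Matrix.diagonal ((RCLike.ofReal : ℝ → ℝ) ∘ Real.sqrt ∘ hP.1.eigenvalues) *
    (star hP.1.eigenvectorUnitary : Matrix (Fin n) (Fin n) ℝ)

lemma aux_mul {U sU D E : Matrix (Fin n) (Fin n) ℝ} (h : sU * U = 1) (hD : D * D = E) :
    U * D * sU * (U * D * sU) = U * E * sU := by
  calc _ = U * D * (sU * U) * D * sU := by simp only [mul_assoc]
    _ = _ := by rw [h, mul_one, mul_assoc U D D, hD]

lemma sqrt_quad (P : Matrix (Fin n) (Fin n) ℝ) (hP : P.PosSemidef) (x : Fin n → ℝ) :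
    x ⬝ᵥ P *ᵥ x = (psq hP *ᵥ x) ⬝ᵥ (psq hP *ᵥ x) := by
  have hs : psq hP * psq hP = P := by
    have hU : (star hP.1.eigenvectorUnitary : Matrix (Fin n) (Fin n) ℝ) *
        (hP.1.eigenvectorUnitary : Matrix (Fin n) (Fin n) ℝ) = 1 :=
      (Matrix.mem_unitaryGroup_iff').mp hP.1.eigenvectorUnitary.2
    have hD : Matrix.diagonal ((RCLike.ofReal : ℝ → ℝ) ∘ Real.sqrt ∘ hP.1.eigenvalues) *
        Matrix.diagonal ((RCLike.ofReal : ℝ → ℝ) ∘ Real.sqrt ∘ hP.1.eigenvalues)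
        = Matrix.diagonal (RCLike.ofReal ∘ hP.1.eigenvalues) := by
      rw [Matrix.diagonal_mul_diagonal]
      congr 1; funext i
      simp [Real.mul_self_sqrt (hP.eigenvalues_nonneg i)]
    conv_rhs => rw [hP.1.spectral_theorem, Unitary.conjStarAlgAut_apply]
    exact aux_mul hU hD
  have hherm : (psq hP).IsHermitian := by
    rw [Matrix.IsHermitian, ← Matrix.star_eq_conjTranspose]
    simp only [psq, star_mul, star_star, mul_assoc]
    rw [Matrix.star_eq_conjTranspose (Matrix.diagonal _), Matrix.diagonal_conjTranspose, star_trivial]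
  conv_lhs => rw [← hs]
  have hPt : (psq hP)ᵀ = psq hP := by
    rw [← Matrix.conjTranspose_eq_transpose_of_trivial]; exact hherm
  rw [← Matrix.mulVec_mulVec, Matrix.dotProduct_mulVec x]
  congr 1
  conv_lhs => rw [← hPt]
  rw [Matrix.vecMul_transpose]

/-- The composite subsystem bound: quadratic form of the perturbed update. -/
lemma subsystem_bound {n₁ n₂ : ℕ} [NeZero n₂]
    (A₁ P₁ : Matrix (Fin n₁) (Fin n₁) ℝ) (B₁ : Matrix (Fin n₁) (Fin n₂) ℝ)
    (P₂ : Matrix (Fin n₂) (Fin n₂) ℝ) (hP₁ : P₁.PosDef) (hP₂ : P₂.PosDef)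
    {ϑ₁ γ₁ ρ₁ a₂ : ℝ} (hϑ₁ : 0 < ϑ₁)
    (hLMI₁ : (γ₁ • P₁ - (1+ϑ₁) • (A₁ᵀ * P₁ * A₁)).PosSemidef)
    (hρ₁ : ρ₁ = (1 + 1/ϑ₁) *
      ‖LinearMap.toContinuousLinearMap
        (Matrix.toEuclideanLin (psq hP₁.posSemidef * B₁))‖^2)
    (ha₂ : a₂ = Finset.univ.inf' Finset.univ_nonempty hP₂.1.eigenvalues)
    (ha₂pos : 0 < a₂) (hρ₁nn : 0 ≤ ρ₁)
    (d₁ : Fin n₁ → ℝ) (d₂ : Fin n₂ → ℝ) :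
    (A₁ *ᵥ d₁ + (-B₁) *ᵥ d₂) ⬝ᵥ P₁ *ᵥ (A₁ *ᵥ d₁ + (-B₁) *ᵥ d₂)
      ≤ γ₁ * (d₁ ⬝ᵥ P₁ *ᵥ d₁) + (ρ₁ / a₂) * (d₂ ⬝ᵥ P₂ *ᵥ d₂) := by
  have hy := young P₁ hP₁.posSemidef hϑ₁ (A₁ *ᵥ d₁) ((-B₁) *ᵥ d₂)
  -- LMI term
  have hLMIuse : (1+ϑ₁) * ((A₁ *ᵥ d₁) ⬝ᵥ P₁ *ᵥ (A₁ *ᵥ d₁)) ≤ γ₁ * (d₁ ⬝ᵥ P₁ *ᵥ d₁) := by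
    have h0 := psd_nonneg hLMI₁ d₁
    rw [Matrix.sub_mulVec, dotProduct_sub, sub_nonneg] at h0
    have e1 : d₁ ⬝ᵥ (γ₁ • P₁) *ᵥ d₁ = γ₁ * (d₁ ⬝ᵥ P₁ *ᵥ d₁) := by
      rw [Matrix.smul_mulVec, dotProduct_smul, smul_eq_mul]
    have e2 : d₁ ⬝ᵥ ((1+ϑ₁) • (A₁ᵀ * P₁ * A₁)) *ᵥ d₁
        = (1+ϑ₁) * ((A₁ *ᵥ d₁) ⬝ᵥ P₁ *ᵥ (A₁ *ᵥ d₁)) := by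
      rw [Matrix.smul_mulVec, dotProduct_smul, smul_eq_mul, dot_transform]
    rw [e1, e2] at h0
    exact h0
  -- input term
  have hneg : ((-B₁) *ᵥ d₂) ⬝ᵥ P₁ *ᵥ ((-B₁) *ᵥ d₂) = (B₁ *ᵥ d₂) ⬝ᵥ P₁ *ᵥ (B₁ *ᵥ d₂) := by
    simp [Matrix.neg_mulVec, Matrix.mulVec_neg, neg_dotProduct, dotProduct_neg]
  have hBbound : (1+1/ϑ₁) * ((B₁ *ᵥ d₂) ⬝ᵥ P₁ *ᵥ (B₁ *ᵥ d₂)) ≤ ρ₁ * (d₂ ⬝ᵥ d₂) := by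
    have hq : (B₁ *ᵥ d₂) ⬝ᵥ P₁ *ᵥ (B₁ *ᵥ d₂)
        = ((psq hP₁.posSemidef * B₁) *ᵥ d₂) ⬝ᵥ ((psq hP₁.posSemidef * B₁) *ᵥ d₂) := by
      rw [sqrt_quad P₁ hP₁.posSemidef, Matrix.mulVec_mulVec]
    rw [hq, hρ₁]
    have hop := opnorm_bound (psq hP₁.posSemidef * B₁) d₂
    have hc : 0 ≤ 1 + 1/ϑ₁ := by positivity
    calc (1+1/ϑ₁) * _ ≤ (1+1/ϑ₁) * (‖LinearMap.toContinuousLinearMap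
          (Matrix.toEuclideanLin (psq hP₁.posSemidef * B₁))‖^2 * (d₂ ⬝ᵥ d₂)) :=
        mul_le_mul_of_nonneg_left hop hc
      _ = (1 + 1/ϑ₁) * ‖LinearMap.toContinuousLinearMap
          (Matrix.toEuclideanLin (psq hP₁.posSemidef * B₁))‖^2 * (d₂ ⬝ᵥ d₂) := by ring
  have hP₂low : a₂ * (d₂ ⬝ᵥ d₂) ≤ d₂ ⬝ᵥ P₂ *ᵥ d₂ := by
    rw [ha₂]; exact eig_lower P₂ hP₂.1 d₂
  have hfinal : ρ₁ * (d₂ ⬝ᵥ d₂) ≤ (ρ₁ / a₂) * (d₂ ⬝ᵥ P₂ *ᵥ d₂) := by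
    have h := mul_le_mul_of_nonneg_left hP₂low (div_nonneg hρ₁nn ha₂pos.le)
    calc ρ₁ * (d₂ ⬝ᵥ d₂) = (ρ₁ / a₂) * (a₂ * (d₂ ⬝ᵥ d₂)) := by
          field_simp
      _ ≤ (ρ₁ / a₂) * (d₂ ⬝ᵥ P₂ *ᵥ d₂) := h
  rw [hneg] at hy
  linarith [hy, hLMIuse, hBbound, hfinal]

end TwoSubAux

open TwoSubAux in
/-- Two-subsystem negative-feedback interconnection: under the subsystem LMIs and the
small-gain conditions, the composite quadratic function decreases by a factor 1+ζ with
ζ ∈ (−1,0), and the interconnected linear system is δ-GAS (exponential incremental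
convergence). -/
theorem two_subsystem_negative_feedback {n₁ n₂ : ℕ} [NeZero n₁] [NeZero n₂]
    (A₁ P₁ : Matrix (Fin n₁) (Fin n₁) ℝ) (A₂ P₂ : Matrix (Fin n₂) (Fin n₂) ℝ)
    (B₁ : Matrix (Fin n₁) (Fin n₂) ℝ) (B₂ : Matrix (Fin n₂) (Fin n₁) ℝ)
    (hP₁ : P₁.PosDef) (hP₂ : P₂.PosDef)
    (ϑ₁ ϑ₂ γ₁ γ₂ : ℝ) (hϑ₁ : 0 < ϑ₁) (hϑ₂ : 0 < ϑ₂)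
    (hγ₁ : γ₁ ∈ Set.Ioo (0:ℝ) 1) (hγ₂ : γ₂ ∈ Set.Ioo (0:ℝ) 1)
    (hLMI₁ : (γ₁ • P₁ - (1+ϑ₁) • (A₁ᵀ * P₁ * A₁)).PosSemidef)
    (hLMI₂ : (γ₂ • P₂ - (1+ϑ₂) • (A₂ᵀ * P₂ * A₂)).PosSemidef)
    (ρ₁ ρ₂ a₁ a₂ : ℝ)
    (hρ₁ : ρ₁ = (1 + 1/ϑ₁) *
      ‖LinearMap.toContinuousLinearMap
        (Matrix.toEuclideanLin (((hP₁.posSemidef.1.eigenvectorUnitary : Matrix (Fin n₁) (Fin n₁) ℝ) *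
          Matrix.diagonal ((RCLike.ofReal : ℝ → ℝ) ∘ Real.sqrt ∘ hP₁.posSemidef.1.eigenvalues) *
          (star hP₁.posSemidef.1.eigenvectorUnitary : Matrix (Fin n₁) (Fin n₁) ℝ)) * B₁))‖^2)
    (hρ₂ : ρ₂ = (1 + 1/ϑ₂) *
      ‖LinearMap.toContinuousLinearMap
        (Matrix.toEuclideanLin (((hP₂.posSemidef.1.eigenvectorUnitary : Matrix (Fin n₂) (Fin n₂) ℝ) *
          Matrix.diagonal ((RCLike.ofReal : ℝ → ℝ) ∘ Real.sqrt ∘ hP₂.posSemidef.1.eigenvalues) *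
          (star hP₂.posSemidef.1.eigenvectorUnitary : Matrix (Fin n₂) (Fin n₂) ℝ)) * B₂))‖^2)
    (ha₁ : a₁ = Finset.univ.inf' Finset.univ_nonempty hP₁.1.eigenvalues)
    (ha₂ : a₂ = Finset.univ.inf' Finset.univ_nonempty hP₂.1.eigenvalues)
    (hsg₁ : ρ₂ / a₁ < 1 - γ₁) (hsg₂ : ρ₁ / a₂ < 1 - γ₂)
    (A : Matrix (Fin n₁ ⊕ Fin n₂) (Fin n₁ ⊕ Fin n₂) ℝ)
    (hA : A = Matrix.fromBlocks A₁ (-B₁) B₂ A₂)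
    (V : ((Fin n₁ ⊕ Fin n₂) → ℝ) → ((Fin n₁ ⊕ Fin n₂) → ℝ) → ℝ)
    (hV : ∀ x x', V x x' =
      ((fun i => x (Sum.inl i)) - (fun i => x' (Sum.inl i))) ⬝ᵥ
        P₁ *ᵥ ((fun i => x (Sum.inl i)) - (fun i => x' (Sum.inl i)))
      + ((fun i => x (Sum.inr i)) - (fun i => x' (Sum.inr i))) ⬝ᵥ
        P₂ *ᵥ ((fun i => x (Sum.inr i)) - (fun i => x' (Sum.inr i)))) :
    ∃ ζ : ℝ, -1 < ζ ∧ ζ < 0 ∧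
      (∀ x x' : (Fin n₁ ⊕ Fin n₂) → ℝ, V (A *ᵥ x) (A *ᵥ x') ≤ (1 + ζ) * V x x') ∧
      ∃ c q : ℝ, 0 < c ∧ 0 < q ∧ q < 1 ∧
        ∀ (x x' : (Fin n₁ ⊕ Fin n₂) → ℝ) (k : ℕ),
          Real.sqrt (∑ i, ((A ^ k *ᵥ x) i - (A ^ k *ᵥ x') i)^2)
            ≤ c * q ^ k * Real.sqrt (∑ i, (x i - x' i)^2) := by
  obtain ⟨hγ₁0, hγ₁1⟩ := hγ₁
  obtain ⟨hγ₂0, hγ₂1⟩ := hγ₂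
  have ha₁pos : 0 < a₁ := by
    rw [ha₁, Finset.lt_inf'_iff]
    exact fun i _ => hP₁.eigenvalues_pos i
  have ha₂pos : 0 < a₂ := by
    rw [ha₂, Finset.lt_inf'_iff]
    exact fun i _ => hP₂.eigenvalues_pos i
  have hρ₁nn : 0 ≤ ρ₁ := by
    rw [hρ₁]
    have : (0:ℝ) < 1 + 1/ϑ₁ := by positivity
    positivity
  have hρ₂nn : 0 ≤ ρ₂ := by
    rw [hρ₂]
    have : (0:ℝ) < 1 + 1/ϑ₂ := by positivity
    positivity
  set μ : ℝ := max (γ₁ + ρ₂ / a₁) (γ₂ + ρ₁ / a₂) with hμdef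
  have hμ1 : μ < 1 := max_lt (by linarith) (by linarith)
  have hμ0 : 0 < μ :=
    lt_of_lt_of_le (lt_of_lt_of_le hγ₁0
      (le_add_of_nonneg_right (div_nonneg hρ₂nn ha₁pos.le))) (le_max_left _ _)
  -- block decomposition of A *ᵥ z
  have hxl : ∀ z : (Fin n₁ ⊕ Fin n₂) → ℝ, (fun i => (A *ᵥ z) (Sum.inl i))
      = A₁ *ᵥ (fun i => z (Sum.inl i)) + (-B₁) *ᵥ (fun i => z (Sum.inr i)) := by
    intro z; funext i
    rw [hA, Matrix.fromBlocks_mulVec]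
    rfl
  have hxr : ∀ z : (Fin n₁ ⊕ Fin n₂) → ℝ, (fun i => (A *ᵥ z) (Sum.inr i))
      = B₂ *ᵥ (fun i => z (Sum.inl i)) + A₂ *ᵥ (fun i => z (Sum.inr i)) := by
    intro z; funext i
    rw [hA, Matrix.fromBlocks_mulVec]
    rfl
  -- the one-step decrease
  have hdec : ∀ x x' : (Fin n₁ ⊕ Fin n₂) → ℝ, V (A *ᵥ x) (A *ᵥ x') ≤ μ * V x x' := by
    intro x x'
    rw [hV, hV]
    set u₁ : Fin n₁ → ℝ := (fun i => x (Sum.inl i)) - (fun i => x' (Sum.inl i)) with hu₁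
    set u₂ : Fin n₂ → ℝ := (fun i => x (Sum.inr i)) - (fun i => x' (Sum.inr i)) with hu₂
    have e₁ : (fun i => (A *ᵥ x) (Sum.inl i)) - (fun i => (A *ᵥ x') (Sum.inl i))
        = A₁ *ᵥ u₁ + (-B₁) *ᵥ u₂ := by
      rw [hxl x, hxl x', hu₁, hu₂, Matrix.mulVec_sub, Matrix.mulVec_sub]
      abel
    have e₂ : (fun i => (A *ᵥ x) (Sum.inr i)) - (fun i => (A *ᵥ x') (Sum.inr i))
        = B₂ *ᵥ u₁ + A₂ *ᵥ u₂ := by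
      rw [hxr x, hxr x', hu₁, hu₂, Matrix.mulVec_sub, Matrix.mulVec_sub]
      abel
    rw [e₁, e₂]
    have k₁ := subsystem_bound A₁ P₁ B₁ P₂ hP₁ hP₂ hϑ₁ hLMI₁ hρ₁ ha₂ ha₂pos hρ₁nn u₁ u₂
    have k₂ := subsystem_bound A₂ P₂ B₂ P₁ hP₂ hP₁ hϑ₂ hLMI₂ hρ₂ ha₁ ha₁pos hρ₂nn u₂ u₁
    -- rewrite k₂'s (-B₂) into B₂ form: we used -B₂ in the lemma, but here B₂ appears without minus.
    have hswap : (B₂ *ᵥ u₁ + A₂ *ᵥ u₂) ⬝ᵥ P₂ *ᵥ (B₂ *ᵥ u₁ + A₂ *ᵥ u₂)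
        = (A₂ *ᵥ u₂ + (-B₂) *ᵥ (-u₁)) ⬝ᵥ P₂ *ᵥ (A₂ *ᵥ u₂ + (-B₂) *ᵥ (-u₁)) := by
      have : (-B₂) *ᵥ (-u₁) = B₂ *ᵥ u₁ := by
        simp [Matrix.neg_mulVec, Matrix.mulVec_neg]
      rw [this, add_comm]
    have k₂' := subsystem_bound A₂ P₂ B₂ P₁ hP₂ hP₁ hϑ₂ hLMI₂ hρ₂ ha₁ ha₁pos hρ₂nn u₂ (-u₁)
    have hnegu : (-u₁) ⬝ᵥ P₁ *ᵥ (-u₁) = u₁ ⬝ᵥ P₁ *ᵥ u₁ := by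
      simp [neg_dotProduct, Matrix.mulVec_neg, dotProduct_neg]
    rw [hnegu] at k₂'
    rw [hswap]
    have hV₁nn : 0 ≤ u₁ ⬝ᵥ P₁ *ᵥ u₁ := psd_nonneg hP₁.posSemidef u₁
    have hV₂nn : 0 ≤ u₂ ⬝ᵥ P₂ *ᵥ u₂ := psd_nonneg hP₂.posSemidef u₂
    have hm₁ : γ₁ + ρ₂ / a₁ ≤ μ := le_max_left _ _
    have hm₂ : γ₂ + ρ₁ / a₂ ≤ μ := le_max_right _ _
    have b₁ : (γ₁ + ρ₂ / a₁) * (u₁ ⬝ᵥ P₁ *ᵥ u₁) ≤ μ * (u₁ ⬝ᵥ P₁ *ᵥ u₁) :=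
      mul_le_mul_of_nonneg_right hm₁ hV₁nn
    have b₂ : (γ₂ + ρ₁ / a₂) * (u₂ ⬝ᵥ P₂ *ᵥ u₂) ≤ μ * (u₂ ⬝ᵥ P₂ *ᵥ u₂) :=
      mul_le_mul_of_nonneg_right hm₂ hV₂nn
    nlinarith [k₁, k₂', b₁, b₂]
  -- iterated decrease
  have hiter : ∀ (x x' : (Fin n₁ ⊕ Fin n₂) → ℝ) (k : ℕ),
      V (A ^ k *ᵥ x) (A ^ k *ᵥ x') ≤ μ ^ k * V x x' := by
    intro x x' k
    induction k with
    | zero => simp [Matrix.one_mulVec]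
    | succ k ih =>
      have hpow : A ^ (k+1) *ᵥ x = A *ᵥ (A ^ k *ᵥ x) := by
        rw [pow_succ', Matrix.mulVec_mulVec]
      have hpow' : A ^ (k+1) *ᵥ x' = A *ᵥ (A ^ k *ᵥ x') := by
        rw [pow_succ', Matrix.mulVec_mulVec]
      rw [hpow, hpow']
      calc V (A *ᵥ (A ^ k *ᵥ x)) (A *ᵥ (A ^ k *ᵥ x'))
          ≤ μ * V (A ^ k *ᵥ x) (A ^ k *ᵥ x') := hdec _ _
        _ ≤ μ * (μ ^ k * V x x') := mul_le_mul_of_nonneg_left ih hμ0.le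
        _ = μ ^ (k+1) * V x x' := by ring
  refine ⟨μ - 1, by linarith, by linarith, ?_, ?_⟩
  · intro x x'
    have := hdec x x'
    calc V (A *ᵥ x) (A *ᵥ x') ≤ μ * V x x' := this
      _ = (1 + (μ - 1)) * V x x' := by ring
  -- δ-GAS part
  · set b₁ : ℝ := Finset.univ.sup' Finset.univ_nonempty hP₁.1.eigenvalues with hb₁
    set b₂ : ℝ := Finset.univ.sup' Finset.univ_nonempty hP₂.1.eigenvalues with hb₂
    set bmax : ℝ := max b₁ b₂ with hbmax
    set amin : ℝ := min a₁ a₂ with hamin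
    have haminpos : 0 < amin := lt_min ha₁pos ha₂pos
    have hb₁pos : 0 < b₁ := by
      obtain ⟨i⟩ := (inferInstance : Nonempty (Fin n₁))
      exact lt_of_lt_of_le (hP₁.eigenvalues_pos i) (Finset.le_sup' _ (Finset.mem_univ i))
    have hbmaxpos : 0 < bmax := lt_of_lt_of_le hb₁pos (le_max_left _ _)
    -- sandwich bounds for V
    have hsumsplit : ∀ x x' : (Fin n₁ ⊕ Fin n₂) → ℝ, ∑ i, (x i - x' i)^2
        = (((fun i => x (Sum.inl i)) - (fun i => x' (Sum.inl i))) ⬝ᵥ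
            ((fun i => x (Sum.inl i)) - (fun i => x' (Sum.inl i))))
          + (((fun i => x (Sum.inr i)) - (fun i => x' (Sum.inr i))) ⬝ᵥ
            ((fun i => x (Sum.inr i)) - (fun i => x' (Sum.inr i)))) := by
      intro x x'
      rw [Fintype.sum_sum_type]
      simp [dotProduct, sq]
    have hlow : ∀ x x' : (Fin n₁ ⊕ Fin n₂) → ℝ,
        amin * (∑ i, (x i - x' i)^2) ≤ V x x' := by
      intro x x'
      rw [hV, hsumsplit x x']
      set w₁ : Fin n₁ → ℝ := (fun i => x (Sum.inl i)) - (fun i => x' (Sum.inl i))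
      set w₂ : Fin n₂ → ℝ := (fun i => x (Sum.inr i)) - (fun i => x' (Sum.inr i))
      have l₁ : a₁ * (w₁ ⬝ᵥ w₁) ≤ w₁ ⬝ᵥ P₁ *ᵥ w₁ := by rw [ha₁]; exact eig_lower P₁ hP₁.1 w₁
      have l₂ : a₂ * (w₂ ⬝ᵥ w₂) ≤ w₂ ⬝ᵥ P₂ *ᵥ w₂ := by rw [ha₂]; exact eig_lower P₂ hP₂.1 w₂
      have d₁nn : 0 ≤ w₁ ⬝ᵥ w₁ :=
        Finset.sum_nonneg fun i _ => mul_self_nonneg _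
      have d₂nn : 0 ≤ w₂ ⬝ᵥ w₂ :=
        Finset.sum_nonneg fun i _ => mul_self_nonneg _
      have m₁ : amin ≤ a₁ := min_le_left _ _
      have m₂ : amin ≤ a₂ := min_le_right _ _
      linarith [l₁, l₂, mul_le_mul_of_nonneg_right m₁ d₁nn, mul_le_mul_of_nonneg_right m₂ d₂nn]
    have hupp : ∀ x x' : (Fin n₁ ⊕ Fin n₂) → ℝ,
        V x x' ≤ bmax * (∑ i, (x i - x' i)^2) := by
      intro x x'
      rw [hV, hsumsplit x x']
      set w₁ : Fin n₁ → ℝ := (fun i => x (Sum.inl i)) - (fun i => x' (Sum.inl i))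
      set w₂ : Fin n₂ → ℝ := (fun i => x (Sum.inr i)) - (fun i => x' (Sum.inr i))
      have l₁ : w₁ ⬝ᵥ P₁ *ᵥ w₁ ≤ b₁ * (w₁ ⬝ᵥ w₁) := by rw [hb₁]; exact eig_upper P₁ hP₁.1 w₁
      have l₂ : w₂ ⬝ᵥ P₂ *ᵥ w₂ ≤ b₂ * (w₂ ⬝ᵥ w₂) := by rw [hb₂]; exact eig_upper P₂ hP₂.1 w₂
      have d₁nn : 0 ≤ w₁ ⬝ᵥ w₁ :=
        Finset.sum_nonneg fun i _ => mul_self_nonneg _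
      have d₂nn : 0 ≤ w₂ ⬝ᵥ w₂ :=
        Finset.sum_nonneg fun i _ => mul_self_nonneg _
      have m₁ : b₁ ≤ bmax := le_max_left _ _
      have m₂ : b₂ ≤ bmax := le_max_right _ _
      linarith [l₁, l₂, mul_le_mul_of_nonneg_right m₁ d₁nn, mul_le_mul_of_nonneg_right m₂ d₂nn]
    refine ⟨Real.sqrt (bmax / amin), Real.sqrt μ,
      Real.sqrt_pos.mpr (div_pos hbmaxpos haminpos), Real.sqrt_pos.mpr hμ0, ?_, ?_⟩
    · have := Real.sqrt_lt_sqrt hμ0.le hμ1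
      simpa using this
    · intro x x' k
      have hkey : ∑ i, ((A ^ k *ᵥ x) i - (A ^ k *ᵥ x') i)^2
          ≤ (bmax / amin) * (μ ^ k * (∑ i, (x i - x' i)^2)) := by
        have h1 := hlow (A ^ k *ᵥ x) (A ^ k *ᵥ x')
        have h2 := hiter x x' k
        have h3 := hupp x x'
        have h4 : μ ^ k * V x x' ≤ μ ^ k * (bmax * ∑ i, (x i - x' i)^2) :=
          mul_le_mul_of_nonneg_left h3 (pow_nonneg hμ0.le k)
        have h5 : amin * (∑ i, ((A ^ k *ᵥ x) i - (A ^ k *ᵥ x') i)^2)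
            ≤ μ ^ k * (bmax * ∑ i, (x i - x' i)^2) := by linarith
        rw [show (bmax / amin) * (μ ^ k * (∑ i, (x i - x' i)^2))
            = (μ ^ k * (bmax * ∑ i, (x i - x' i)^2)) / amin by
          field_simp]
        rw [le_div_iff₀ haminpos]
        linarith [h5]
      have hsq : Real.sqrt (μ ^ k) = (Real.sqrt μ) ^ k := by
        have h : ((Real.sqrt μ) ^ k)^2 = μ ^ k := by
          rw [← pow_mul, mul_comm, pow_mul, Real.sq_sqrt hμ0.le]
        rw [← h, Real.sqrt_sq (pow_nonneg (Real.sqrt_nonneg μ) k)]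
      calc Real.sqrt (∑ i, ((A ^ k *ᵥ x) i - (A ^ k *ᵥ x') i)^2)
          ≤ Real.sqrt ((bmax / amin) * (μ ^ k * (∑ i, (x i - x' i)^2))) :=
            Real.sqrt_le_sqrt hkey
        _ = Real.sqrt (bmax / amin) * (Real.sqrt (μ ^ k) * Real.sqrt (∑ i, (x i - x' i)^2)) := by
            rw [Real.sqrt_mul (div_nonneg hbmaxpos.le haminpos.le),
              Real.sqrt_mul (pow_nonneg hμ0.le k)]
        _ = Real.sqrt (bmax / amin) * Real.sqrt μ ^ k * Real.sqrt (∑ i, (x i - x' i)^2) := by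
            rw [hsq]; ring
end
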